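/- Let (X, Y, V) be a random vector with values in ℝ^d × ℝ × ℝ on a probability space, with E[Y²] < ∞ and E[V²] < ∞. Fix x ∈ ℝ^d, r > 0 and M ≥ 0. Assume there exist measurable functions m_{YV}, m_Y, m_V : B(x,r) → ℝ such that for every Borel set A ⊆ B(x,r): E[ Y V · 1{X ∈ A} ] = ∫_A m_{YV} dλ, E[ Y · 1{X ∈ A} ] = ∫_A m_Y dλ, and E[ V · 1{X ∈ A} ] = ∫_A m_V dλ; assume m_{YV} is continuous at x and |m_Y| ≤ M, |m_V| ≤ M on B(x,r). Let K : ℝ^d → ℝ be bounded and measurable with support contained in the closed ball of radius ρ > 0 centered at the origin. For a > 0 set W_a := Y · a^{−d} K( (x − X)/a ) and U_a := V · a^{−d} K( (x − X)/a ). Then lim_{a → 0⁺} a^d · Cov( W_a, U_a ) = m_{YV}(x) · ∫_{ℝ^d} K(u)² λ(du). -/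

import Mathlib

open MeasureTheory Filter Topology Set


lemma density_posPart_bound
    {Ω : Type*} [MeasurableSpace Ω] (μ : Measure Ω) {d : ℕ}
    (X : Ω → EuclideanSpace ℝ (Fin d)) (hX : Measurable X)
    (f : Ω → ℝ) (hf : Integrable f μ)
    (x : EuclideanSpace ℝ (Fin d)) (r : ℝ)
    (m : EuclideanSpace ℝ (Fin d) → ℝ) (hm : Measurable m)
    (H : ∀ A : Set (EuclideanSpace ℝ (Fin d)), MeasurableSet A → A ⊆ Metric.ball x r →
      ∫ ω in X ⁻¹' A, f ω ∂μ = ∫ u in A, m u ∂volume) :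
    ∫⁻ u in Metric.ball x r, ENNReal.ofReal (m u) ∂volume
      ≤ ENNReal.ofReal (∫ ω, |f ω| ∂μ) := by
  set C : ℝ := ∫ ω, |f ω| ∂μ with hC
  have hC0 : 0 ≤ C := integral_nonneg fun ω => abs_nonneg _
  set P : ℕ → Set (EuclideanSpace ℝ (Fin d)) :=
    fun n => Metric.ball x r ∩ {u | 0 ≤ m u ∧ m u ≤ n} with hP
  have hPmeas : ∀ n, MeasurableSet (P n) := by
    intro n
    exact Metric.isOpen_ball.measurableSet.inter
      ((measurableSet_le measurable_const hm).inter (measurableSet_le hm measurable_const))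
  have hPsub : ∀ n, P n ⊆ Metric.ball x r := fun n => inter_subset_left
  have hPfin : ∀ n, volume (P n) < ⊤ := fun n =>
    lt_of_le_of_lt (measure_mono (hPsub n)) measure_ball_lt_top
  have hmint : ∀ n, IntegrableOn m (P n) volume := by
    intro n
    refine Integrable.mono'
      ((integrableOn_const (hPfin n).ne) : IntegrableOn (fun _ => (n:ℝ)) (P n) volume)
      hm.aestronglyMeasurable ?_
    refine (ae_restrict_iff' (hPmeas n)).2 (ae_of_all _ ?_)
    intro u hu
    rw [Real.norm_eq_abs, abs_of_nonneg hu.2.1]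
    exact hu.2.2
  have hstep : ∀ n, ∫⁻ u in P n, ENNReal.ofReal (m u) ∂volume ≤ ENNReal.ofReal C := by
    intro n
    have h1 : ∫⁻ u in P n, ENNReal.ofReal (m u) ∂volume
        = ENNReal.ofReal (∫ u in P n, m u ∂volume) := by
      rw [ofReal_integral_eq_lintegral_ofReal (hmint n)]
      refine (ae_restrict_iff' (hPmeas n)).2 (ae_of_all _ ?_)
      exact fun u hu => hu.2.1
    rw [h1]
    apply ENNReal.ofReal_le_ofReal
    rw [← H (P n) (hPmeas n) (hPsub n)]
    calc ∫ ω in X ⁻¹' P n, f ω ∂μ ≤ ∫ ω in X ⁻¹' P n, |f ω| ∂μ := by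
          exact integral_mono hf.integrableOn hf.abs.integrableOn (fun ω => le_abs_self _)
      _ ≤ C := setIntegral_le_integral hf.abs (ae_of_all _ fun ω => abs_nonneg _)
  -- monotone convergence
  set g : ℕ → EuclideanSpace ℝ (Fin d) → ENNReal :=
    fun n => (P n).indicator (fun u => ENNReal.ofReal (m u)) with hg
  have hgmeas : ∀ n, Measurable (g n) := fun n =>
    (ENNReal.measurable_ofReal.comp hm).indicator (hPmeas n)
  have hgmono : Monotone g := by
    intro i j hij u
    refine Set.indicator_le_indicator_of_subset ?_ (fun _ => zero_le) u
    refine inter_subset_inter_right _ ?_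
    intro u hu
    exact ⟨hu.1, hu.2.trans (by exact_mod_cast Nat.cast_le.2 hij)⟩
  have hsup : ∀ u, (Metric.ball x r).indicator (fun u => ENNReal.ofReal (m u)) u
      = ⨆ n, g n u := by
    intro u
    by_cases hu : u ∈ Metric.ball x r
    · rw [indicator_of_mem hu]
      by_cases hmu : 0 ≤ m u
      · obtain ⟨n, hn⟩ := exists_nat_ge (m u)
        apply le_antisymm
        · refine le_iSup_of_le n ?_
          simp only [hg]
          exact le_of_eq (indicator_of_mem (show u ∈ P n from ⟨hu, hmu, hn⟩) (fun u => ENNReal.ofReal (m u))).symm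
        · refine iSup_le fun n => ?_
          exact Set.indicator_le_self' (fun _ _ => zero_le) u
      · push_neg at hmu
        have h0 : ENNReal.ofReal (m u) = 0 := ENNReal.ofReal_eq_zero.2 hmu.le
        rw [h0]
        refine le_antisymm (zero_le) (iSup_le fun n => ?_)
        have : g n u ≤ ENNReal.ofReal (m u) := Set.indicator_le_self' (fun _ _ => zero_le) u
        simpa [h0] using this
    · rw [indicator_of_notMem hu]
      symm
      refine le_antisymm (iSup_le fun n => ?_) (zero_le)
      simp only [hg]
      exact le_of_eq (indicator_of_notMem (fun h : u ∈ P n => hu (hPsub n h)) (fun u => ENNReal.ofReal (m u)))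
  calc ∫⁻ u in Metric.ball x r, ENNReal.ofReal (m u) ∂volume
      = ∫⁻ u, (Metric.ball x r).indicator (fun u => ENNReal.ofReal (m u)) u ∂volume := by
        rw [lintegral_indicator Metric.isOpen_ball.measurableSet]
    _ = ∫⁻ u, ⨆ n, g n u ∂volume := by simp_rw [hsup]
    _ = ⨆ n, ∫⁻ u, g n u ∂volume := lintegral_iSup hgmeas hgmono
    _ ≤ ENNReal.ofReal C := by
        refine iSup_le fun n => ?_
        simp only [hg]
        rw [lintegral_indicator (hPmeas n)]
        exact hstep n
lemma density_integrableOn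
    {Ω : Type*} [MeasurableSpace Ω] (μ : Measure Ω) {d : ℕ}
    (X : Ω → EuclideanSpace ℝ (Fin d)) (hX : Measurable X)
    (f : Ω → ℝ) (hf : Integrable f μ)
    (x : EuclideanSpace ℝ (Fin d)) (r : ℝ)
    (m : EuclideanSpace ℝ (Fin d) → ℝ) (hm : Measurable m)
    (H : ∀ A : Set (EuclideanSpace ℝ (Fin d)), MeasurableSet A → A ⊆ Metric.ball x r →
      ∫ ω in X ⁻¹' A, f ω ∂μ = ∫ u in A, m u ∂volume) :
    IntegrableOn m (Metric.ball x r) volume := by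
  have h1 := density_posPart_bound μ X hX f hf x r m hm H
  have h2 := density_posPart_bound μ X hX (fun ω => -f ω) hf.neg x r (fun u => -m u) hm.neg ?_
  · refine ⟨hm.aestronglyMeasurable.restrict, ?_⟩
    rw [hasFiniteIntegral_iff_norm]
    have hb : ∀ u, ENNReal.ofReal ‖m u‖
        ≤ ENNReal.ofReal (m u) + ENNReal.ofReal (-(m u)) := by
      intro u
      rcases le_total 0 (m u) with h | h
      · rw [Real.norm_eq_abs, abs_of_nonneg h]
        exact le_add_of_nonneg_right (zero_le)
      · rw [Real.norm_eq_abs, abs_of_nonpos h]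
        exact le_add_of_nonneg_left (zero_le)
    calc ∫⁻ u in Metric.ball x r, ENNReal.ofReal ‖m u‖ ∂volume
        ≤ ∫⁻ u in Metric.ball x r,
            (ENNReal.ofReal (m u) + ENNReal.ofReal (-(m u))) ∂volume :=
          lintegral_mono fun u => hb u
      _ = (∫⁻ u in Metric.ball x r, ENNReal.ofReal (m u) ∂volume)
          + ∫⁻ u in Metric.ball x r, ENNReal.ofReal (-(m u)) ∂volume :=
          lintegral_add_left (ENNReal.measurable_ofReal.comp hm) _
      _ ≤ ENNReal.ofReal (∫ ω, |f ω| ∂μ) + ENNReal.ofReal (∫ ω, |(-f ω)| ∂μ) := by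
          exact add_le_add h1 (by simpa using h2)
      _ < ⊤ := by simp [ENNReal.add_lt_top]
  · intro A hA hAsub
    rw [integral_neg, integral_neg, H A hA hAsub]

lemma density_ext_fun
    {Ω : Type*} [MeasurableSpace Ω] (μ : Measure Ω) {d : ℕ}
    (X : Ω → EuclideanSpace ℝ (Fin d)) (hX : Measurable X)
    (f : Ω → ℝ) (hf : Integrable f μ)
    (x : EuclideanSpace ℝ (Fin d)) (r : ℝ)
    (m : EuclideanSpace ℝ (Fin d) → ℝ) (hm : Measurable m)
    (H : ∀ A : Set (EuclideanSpace ℝ (Fin d)), MeasurableSet A → A ⊆ Metric.ball x r →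
      ∫ ω in X ⁻¹' A, f ω ∂μ = ∫ u in A, m u ∂volume)
    (φ : EuclideanSpace ℝ (Fin d) → ℝ) (hφmeas : Measurable φ)
    (C : ℝ) (hφbdd : ∀ u, |φ u| ≤ C)
    (hφsupp : Function.support φ ⊆ Metric.ball x r) :
    ∫ ω, f ω * φ (X ω) ∂μ = ∫ u, m u * φ u ∂volume := by
  have hmInt : IntegrableOn m (Metric.ball x r) volume :=
    density_integrableOn μ X hX f hf x r m hm H
  have hball : MeasurableSet (Metric.ball x r) := Metric.isOpen_ball.measurableSet
  -- step 1: simple functions cut to the ball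
  have hsimple : ∀ ψ : SimpleFunc (EuclideanSpace ℝ (Fin d)) ℝ,
      ∫ ω, f ω * (Metric.ball x r).indicator (⇑ψ) (X ω) ∂μ
        = ∫ u, m u * (Metric.ball x r).indicator (⇑ψ) u ∂volume := by
    intro ψ
    induction ψ using SimpleFunc.induction with
    | @const c s hs =>
      have hco : ∀ u, (Metric.ball x r).indicator
          (⇑(SimpleFunc.piecewise s hs (SimpleFunc.const _ c) (SimpleFunc.const _ 0))) u
          = (s ∩ Metric.ball x r).indicator (fun _ => c) u := by
        intro u
        by_cases hu : u ∈ Metric.ball x r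
        · rw [indicator_of_mem hu]
          by_cases hus : u ∈ s
          · rw [indicator_of_mem (Set.mem_inter hus hu)]
            simp [SimpleFunc.piecewise_apply, hus]
          · rw [indicator_of_notMem (fun h => hus h.1)]
            simp [SimpleFunc.piecewise_apply, hus]
        · rw [indicator_of_notMem hu, indicator_of_notMem (fun h => hu h.2)]
      have hmeasI : MeasurableSet (s ∩ Metric.ball x r) := hs.inter hball
      have hsub : s ∩ Metric.ball x r ⊆ Metric.ball x r := inter_subset_right
      have hL : ∫ ω, f ω * (Metric.ball x r).indicator
          (⇑(SimpleFunc.piecewise s hs (SimpleFunc.const _ c) (SimpleFunc.const _ 0))) (X ω) ∂μ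
          = c * ∫ ω in X ⁻¹' (s ∩ Metric.ball x r), f ω ∂μ := by
        have : ∀ ω, f ω * (Metric.ball x r).indicator
            (⇑(SimpleFunc.piecewise s hs (SimpleFunc.const _ c) (SimpleFunc.const _ 0))) (X ω)
            = (X ⁻¹' (s ∩ Metric.ball x r)).indicator (fun ω => c * f ω) ω := by
          intro ω
          rw [hco]
          by_cases h : X ω ∈ s ∩ Metric.ball x r
          · rw [indicator_of_mem h,
              indicator_of_mem (show ω ∈ X ⁻¹' (s ∩ Metric.ball x r) from h)]; ring
          · rw [indicator_of_notMem h,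
              indicator_of_notMem (show ω ∉ X ⁻¹' (s ∩ Metric.ball x r) from h)]; ring
        rw [integral_congr_ae (ae_of_all _ this),
          integral_indicator (hmeasI.preimage hX), integral_const_mul]
      have hR : ∫ u, m u * (Metric.ball x r).indicator
          (⇑(SimpleFunc.piecewise s hs (SimpleFunc.const _ c) (SimpleFunc.const _ 0))) u ∂volume
          = c * ∫ u in s ∩ Metric.ball x r, m u ∂volume := by
        have : ∀ u, m u * (Metric.ball x r).indicator
            (⇑(SimpleFunc.piecewise s hs (SimpleFunc.const _ c) (SimpleFunc.const _ 0))) u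
            = (s ∩ Metric.ball x r).indicator (fun u => c * m u) u := by
          intro u
          rw [hco]
          by_cases h : u ∈ s ∩ Metric.ball x r
          · rw [indicator_of_mem h, indicator_of_mem h]; ring
          · rw [indicator_of_notMem h, indicator_of_notMem h]; ring
        rw [integral_congr_ae (ae_of_all _ this), integral_indicator hmeasI,
          integral_const_mul]
      rw [hL, hR, H _ hmeasI hsub]
    | @add ψ₁ ψ₂ hdisj ih₁ ih₂ =>
      obtain ⟨C₁, hC₁⟩ := ψ₁.exists_forall_norm_le
      obtain ⟨C₂, hC₂⟩ := ψ₂.exists_forall_norm_le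
      have hint1 : Integrable (fun ω => f ω * (Metric.ball x r).indicator (⇑ψ₁) (X ω)) μ := by
        have := Integrable.bdd_mul (f := fun ω => (Metric.ball x r).indicator (⇑ψ₁) (X ω)) hf
          (((ψ₁.measurable.indicator hball).comp hX).aestronglyMeasurable)
          (ae_of_all _ fun ω => le_trans (norm_indicator_le_norm_self _ _) (hC₁ _))
        simpa [mul_comm] using this
      have hint2 : Integrable (fun ω => f ω * (Metric.ball x r).indicator (⇑ψ₂) (X ω)) μ := by
        have := Integrable.bdd_mul (f := fun ω => (Metric.ball x r).indicator (⇑ψ₂) (X ω)) hf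
          (((ψ₂.measurable.indicator hball).comp hX).aestronglyMeasurable)
          (ae_of_all _ fun ω => le_trans (norm_indicator_le_norm_self _ _) (hC₂ _))
        simpa [mul_comm] using this
      have hint1' : Integrable (fun u => m u * (Metric.ball x r).indicator (⇑ψ₁) u) volume := by
        have heq : ∀ u, m u * (Metric.ball x r).indicator (⇑ψ₁) u
            = (Metric.ball x r).indicator (fun u => m u * ψ₁ u) u := by
          intro u
          by_cases h : u ∈ Metric.ball x r
          · rw [indicator_of_mem h, indicator_of_mem h]
          · rw [indicator_of_notMem h, indicator_of_notMem h, mul_zero]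
        rw [show (fun u => m u * (Metric.ball x r).indicator (⇑ψ₁) u)
            = (Metric.ball x r).indicator (fun u => m u * ψ₁ u) from funext heq,
          integrable_indicator_iff hball]
        have := Integrable.bdd_mul (μ := volume.restrict (Metric.ball x r))
          (f := fun u => ψ₁ u) hmInt ψ₁.measurable.aestronglyMeasurable (ae_of_all _ hC₁)
        simpa [mul_comm, IntegrableOn] using this
      have hint2' : Integrable (fun u => m u * (Metric.ball x r).indicator (⇑ψ₂) u) volume := by
        have heq : ∀ u, m u * (Metric.ball x r).indicator (⇑ψ₂) u
            = (Metric.ball x r).indicator (fun u => m u * ψ₂ u) u := by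
          intro u
          by_cases h : u ∈ Metric.ball x r
          · rw [indicator_of_mem h, indicator_of_mem h]
          · rw [indicator_of_notMem h, indicator_of_notMem h, mul_zero]
        rw [show (fun u => m u * (Metric.ball x r).indicator (⇑ψ₂) u)
            = (Metric.ball x r).indicator (fun u => m u * ψ₂ u) from funext heq,
          integrable_indicator_iff hball]
        have := Integrable.bdd_mul (μ := volume.restrict (Metric.ball x r))
          (f := fun u => ψ₂ u) hmInt ψ₂.measurable.aestronglyMeasurable (ae_of_all _ hC₂)
        simpa [mul_comm, IntegrableOn] using this
      have hco : ∀ u, (Metric.ball x r).indicator (⇑(ψ₁ + ψ₂)) u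
          = (Metric.ball x r).indicator (⇑ψ₁) u + (Metric.ball x r).indicator (⇑ψ₂) u := by
        intro u
        by_cases h : u ∈ Metric.ball x r
        · simp [indicator_of_mem h]
        · simp [indicator_of_notMem h]
      calc ∫ ω, f ω * (Metric.ball x r).indicator (⇑(ψ₁ + ψ₂)) (X ω) ∂μ
          = ∫ ω, (f ω * (Metric.ball x r).indicator (⇑ψ₁) (X ω)
              + f ω * (Metric.ball x r).indicator (⇑ψ₂) (X ω)) ∂μ := by
            refine integral_congr_ae (ae_of_all _ fun ω => ?_)
            beta_reduce
            rw [hco]; ring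
        _ = (∫ ω, f ω * (Metric.ball x r).indicator (⇑ψ₁) (X ω) ∂μ)
            + ∫ ω, f ω * (Metric.ball x r).indicator (⇑ψ₂) (X ω) ∂μ :=
            integral_add hint1 hint2
        _ = (∫ u, m u * (Metric.ball x r).indicator (⇑ψ₁) u ∂volume)
            + ∫ u, m u * (Metric.ball x r).indicator (⇑ψ₂) u ∂volume := by rw [ih₁, ih₂]
        _ = ∫ u, m u * (Metric.ball x r).indicator (⇑(ψ₁ + ψ₂)) u ∂volume := by
            rw [← integral_add hint1' hint2']
            refine integral_congr_ae (ae_of_all _ fun u => ?_)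
            beta_reduce
            rw [hco]; ring
  -- step 2: approximation
  have hC0 : 0 ≤ C := le_trans (abs_nonneg _) (hφbdd 0)
  set ψn : ℕ → SimpleFunc (EuclideanSpace ℝ (Fin d)) ℝ :=
    fun n => SimpleFunc.approxOn φ hφmeas Set.univ 0 (Set.mem_univ 0) n with hψn
  have hψbd : ∀ n u, ‖ψn n u‖ ≤ C + C := by
    intro n u
    refine le_trans (SimpleFunc.norm_approxOn_zero_le hφmeas (Set.mem_univ 0) u n) ?_
    have := hφbdd u
    rw [Real.norm_eq_abs]
    linarith
  have hψtend : ∀ u, Tendsto (fun n => ψn n u) atTop (𝓝 (φ u)) := fun u =>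
    SimpleFunc.tendsto_approxOn hφmeas (Set.mem_univ 0) (by simp)
  have hφzero : ∀ u, u ∉ Metric.ball x r → φ u = 0 := by
    intro u hu
    by_contra h
    exact hu (hφsupp h)
  have hL : Tendsto (fun n => ∫ ω, f ω * (Metric.ball x r).indicator (⇑(ψn n)) (X ω) ∂μ)
      atTop (𝓝 (∫ ω, f ω * φ (X ω) ∂μ)) := by
    refine tendsto_integral_of_dominated_convergence (fun ω => (C + C) * |f ω|)
      (fun n => (hf.1.mul
        ((((ψn n).measurable.indicator hball).comp hX).aestronglyMeasurable))) 
      (hf.abs.const_mul _) (fun n => ae_of_all _ fun ω => ?_) (ae_of_all _ fun ω => ?_)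
    · rw [norm_mul, Real.norm_eq_abs (f ω), mul_comm]
      refine mul_le_mul_of_nonneg_right ?_ (abs_nonneg _)
      exact le_trans (norm_indicator_le_norm_self _ _) (hψbd n _)
    · by_cases h : X ω ∈ Metric.ball x r
      · simp only [indicator_of_mem h]
        exact (hψtend (X ω)).const_mul _
      · simp only [indicator_of_notMem h, mul_zero]
        rw [hφzero (X ω) h, mul_zero]
        exact tendsto_const_nhds
  have hR : Tendsto (fun n => ∫ u, m u * (Metric.ball x r).indicator (⇑(ψn n)) u ∂volume)
      atTop (𝓝 (∫ u, m u * φ u ∂volume)) := by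
    refine tendsto_integral_of_dominated_convergence
      (fun u => (C + C) * (Metric.ball x r).indicator (fun u => |m u|) u)
      (fun n => (hm.aestronglyMeasurable.mul
        (((ψn n).measurable.indicator hball).aestronglyMeasurable)))
      ?_ (fun n => ae_of_all _ fun u => ?_) (ae_of_all _ fun u => ?_)
    · exact (((integrable_indicator_iff hball).2 hmInt.abs).const_mul _)
    · beta_reduce
      by_cases h : u ∈ Metric.ball x r
      · rw [indicator_of_mem h, indicator_of_mem h, norm_mul, Real.norm_eq_abs (m u), mul_comm]
        exact mul_le_mul_of_nonneg_right (hψbd n u) (abs_nonneg _)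
      · rw [indicator_of_notMem h, indicator_of_notMem h, mul_zero, mul_zero, norm_zero]
    · by_cases h : u ∈ Metric.ball x r
      · simp only [indicator_of_mem h]
        exact (hψtend u).const_mul _
      · simp only [indicator_of_notMem h, mul_zero]
        rw [hφzero u h, mul_zero]
        exact tendsto_const_nhds
  have : (fun n => ∫ ω, f ω * (Metric.ball x r).indicator (⇑(ψn n)) (X ω) ∂μ)
      = fun n => ∫ u, m u * (Metric.ball x r).indicator (⇑(ψn n)) u ∂volume :=
    funext fun n => hsimple (ψn n)
  rw [this] at hL
  exact tendsto_nhds_unique hL hR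


lemma integral_kernel_change {d : ℕ} (x : EuclideanSpace ℝ (Fin d))
    (g ψ : EuclideanSpace ℝ (Fin d) → ℝ) {a : ℝ} (ha : 0 < a) :
    ∫ u, g u * ψ (a⁻¹ • (x - u)) ∂volume
      = a ^ d * ∫ v, g (x - a • v) * ψ v ∂volume := by
  have h1 : (∫ u, g u * ψ (a⁻¹ • (x - u)) ∂volume)
      = ∫ w, g (x - w) * ψ (a⁻¹ • w) ∂volume := by
    rw [← integral_sub_left_eq_self (fun w => g (x - w) * ψ (a⁻¹ • w)) volume x]
    refine integral_congr_ae (ae_of_all _ fun u => ?_)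
    simp [sub_sub_cancel]
  have h2 := MeasureTheory.Measure.integral_comp_smul (volume : Measure (EuclideanSpace ℝ (Fin d)))
    (fun w => g (x - w) * ψ (a⁻¹ • w)) a
  rw [finrank_euclideanSpace_fin] at h2
  have h3 : ∀ v : EuclideanSpace ℝ (Fin d),
      g (x - a • v) * ψ (a⁻¹ • a • v) = g (x - a • v) * ψ v := by
    intro v
    rw [smul_smul, inv_mul_cancel₀ ha.ne', one_smul]
  rw [h1]
  have h4 : |(a ^ d)⁻¹| = (a ^ d)⁻¹ := abs_of_nonneg (inv_nonneg.2 (pow_nonneg ha.le d))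
  rw [h4, smul_eq_mul] at h2
  have h5 : (∫ v, g (x - a • v) * ψ v ∂volume)
      = (a ^ d)⁻¹ * ∫ w, g (x - w) * ψ (a⁻¹ • w) ∂volume := by
    rw [← h2]
    refine integral_congr_ae (ae_of_all _ fun v => ?_)
    beta_reduce
    rw [h3]
  rw [h5, ← mul_assoc, mul_inv_cancel₀ (pow_pos ha d).ne', one_mul]
/-- Rescaled covariance limit for kernel-weighted variables: with density versions
`m_{YV}, m_Y, m_V` near `x` of `E[YV | X = u] g(u)`, `E[Y | X = u] g(u)`,
`E[V | X = u] g(u)` (the first continuous at `x`, the latter two bounded by `M`), and a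
bounded kernel `K` supported in the closed ball of radius `ρ`, setting
`W_a = Y a^{−d} K((x−X)/a)` and `U_a = V a^{−d} K((x−X)/a)`, one has
`a^d Cov(W_a, U_a) → m_{YV}(x) ∫ K²` as `a → 0⁺`. -/
theorem kernel_rescaled_covariance_limit
    {Ω : Type*} [MeasurableSpace Ω] (μ : Measure Ω) [IsProbabilityMeasure μ]
    (d : ℕ) (hd : 1 ≤ d)
    (X : Ω → EuclideanSpace ℝ (Fin d)) (Y V : Ω → ℝ)
    (hX : Measurable X) (hY : Measurable Y) (hV : Measurable V)
    (hY2 : MemLp Y 2 μ) (hV2 : MemLp V 2 μ)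
    (x : EuclideanSpace ℝ (Fin d)) (r : ℝ) (hr : 0 < r) (M : ℝ) (hM : 0 ≤ M)
    (mYV mY mV : EuclideanSpace ℝ (Fin d) → ℝ)
    (hmYVmeas : Measurable mYV) (hmYmeas : Measurable mY) (hmVmeas : Measurable mV)
    (hYVdens : ∀ A : Set (EuclideanSpace ℝ (Fin d)), MeasurableSet A →
      A ⊆ Metric.ball x r → ∫ ω in X ⁻¹' A, Y ω * V ω ∂μ = ∫ u in A, mYV u ∂volume)
    (hYdens : ∀ A : Set (EuclideanSpace ℝ (Fin d)), MeasurableSet A →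
      A ⊆ Metric.ball x r → ∫ ω in X ⁻¹' A, Y ω ∂μ = ∫ u in A, mY u ∂volume)
    (hVdens : ∀ A : Set (EuclideanSpace ℝ (Fin d)), MeasurableSet A →
      A ⊆ Metric.ball x r → ∫ ω in X ⁻¹' A, V ω ∂μ = ∫ u in A, mV u ∂volume)
    (hmYVcont : ContinuousAt mYV x)
    (hmYbdd : ∀ u ∈ Metric.ball x r, |mY u| ≤ M)
    (hmVbdd : ∀ u ∈ Metric.ball x r, |mV u| ≤ M)
    (K : EuclideanSpace ℝ (Fin d) → ℝ)
    (hKmeas : Measurable K) (hKbdd : ∃ B : ℝ, ∀ u, |K u| ≤ B)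
    (ρ : ℝ) (hρ : 0 < ρ) (hKsupp : Function.support K ⊆ Metric.closedBall 0 ρ) :
    Tendsto (fun a : ℝ =>
        a ^ d *
          ((∫ ω, (Y ω * (a ^ d)⁻¹ * K (a⁻¹ • (x - X ω))) *
              (V ω * (a ^ d)⁻¹ * K (a⁻¹ • (x - X ω))) ∂μ)
            - (∫ ω, Y ω * (a ^ d)⁻¹ * K (a⁻¹ • (x - X ω)) ∂μ) *
              (∫ ω, V ω * (a ^ d)⁻¹ * K (a⁻¹ • (x - X ω)) ∂μ)))
      (𝓝[>] 0) (𝓝 (mYV x * ∫ u, K u ^ 2)) := by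
  obtain ⟨B, hB⟩ := hKbdd
  have hB0 : 0 ≤ B := le_trans (abs_nonneg _) (hB 0)
  have hYV : Integrable (fun ω => Y ω * V ω) μ := by
    refine Integrable.mono' (hY2.integrable_sq.add hV2.integrable_sq)
      (hY.mul hV).aestronglyMeasurable (ae_of_all _ fun ω => ?_)
    simp only [Pi.add_apply]
    rw [Real.norm_eq_abs, abs_mul]
    nlinarith [sq_nonneg (|Y ω| - |V ω|), sq_abs (Y ω), sq_abs (V ω),
      abs_nonneg (Y ω), abs_nonneg (V ω)]
  have hYint : Integrable Y μ := hY2.integrable one_le_two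
  have hVint : Integrable V μ := hV2.integrable one_le_two
  have hKdist : ∀ {a : ℝ}, 0 < a → ∀ u, K (a⁻¹ • (x - u)) ≠ 0 → dist u x ≤ a * ρ := by
    intro a ha u hKu
    have h1 : a⁻¹ • (x - u) ∈ Metric.closedBall (0 : EuclideanSpace ℝ (Fin d)) ρ := hKsupp hKu
    rw [Metric.mem_closedBall, dist_zero_right] at h1
    have h2 : ‖x - u‖ = a * ‖a⁻¹ • (x - u)‖ := by
      rw [norm_smul, Real.norm_eq_abs, abs_of_pos (inv_pos.2 ha)]
      field_simp
    rw [dist_comm, dist_eq_norm, h2]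
    exact mul_le_mul_of_nonneg_left h1 ha.le
  obtain ⟨δ, hδpos, hδ⟩ := Metric.continuousAt_iff.1 hmYVcont 1 one_pos
  have hmYVloc : ∀ u, dist u x < δ → |mYV u| ≤ |mYV x| + 1 := by
    intro u hu
    have := hδ hu
    rw [Real.dist_eq] at this
    have h1 : |mYV u| - |mYV x| ≤ |mYV u - mYV x| := abs_sub_abs_le_abs_sub _ _
    linarith
  set a₀ : ℝ := min (r / ρ) (δ / ρ) with ha₀def
  have ha₀ : 0 < a₀ := lt_min (div_pos hr hρ) (div_pos hδpos hρ)
  have harρ : ∀ {a : ℝ}, 0 < a → a < a₀ → a * ρ < r := by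
    intro a ha haa
    have h1 : a < r / ρ := lt_of_lt_of_le haa (min_le_left _ _)
    calc a * ρ < r / ρ * ρ := mul_lt_mul_of_pos_right h1 hρ
      _ = r := div_mul_cancel₀ r hρ.ne'
  have haδ : ∀ {a : ℝ}, 0 < a → a < a₀ → a * ρ < δ := by
    intro a ha haa
    have h1 : a < δ / ρ := lt_of_lt_of_le haa (min_le_right _ _)
    calc a * ρ < δ / ρ * ρ := mul_lt_mul_of_pos_right h1 hρ
      _ = δ := div_mul_cancel₀ δ hρ.ne'
  -- key identity
  have key : ∀ a : ℝ, 0 < a → a < a₀ →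
      a ^ d *
          ((∫ ω, (Y ω * (a ^ d)⁻¹ * K (a⁻¹ • (x - X ω))) *
              (V ω * (a ^ d)⁻¹ * K (a⁻¹ • (x - X ω))) ∂μ)
            - (∫ ω, Y ω * (a ^ d)⁻¹ * K (a⁻¹ • (x - X ω)) ∂μ) *
              (∫ ω, V ω * (a ^ d)⁻¹ * K (a⁻¹ • (x - X ω)) ∂μ))
      = (∫ v, mYV (x - a • v) * K v ^ 2 ∂volume)
        - a ^ d * ((∫ v, mY (x - a • v) * K v ∂volume)
            * (∫ v, mV (x - a • v) * K v ∂volume)) := by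
    intro a ha haa
    have hne : (a : ℝ) ^ d ≠ 0 := (pow_pos ha d).ne'
    have hmeasaff : Measurable (fun u : EuclideanSpace ℝ (Fin d) => a⁻¹ • (x - u)) :=
      (measurable_const.sub measurable_id).const_smul a⁻¹
    have hφ1meas : Measurable (fun u => K (a⁻¹ • (x - u))) := hKmeas.comp hmeasaff
    have hφ2meas : Measurable (fun u => K (a⁻¹ • (x - u)) ^ 2) := hφ1meas.pow_const 2
    have hsupp1 : Function.support (fun u => K (a⁻¹ • (x - u))) ⊆ Metric.ball x r := by
      intro u hu
      exact Metric.mem_ball.2 (lt_of_le_of_lt (hKdist ha u hu) (harρ ha haa))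
    have hsupp2 : Function.support (fun u => K (a⁻¹ • (x - u)) ^ 2) ⊆ Metric.ball x r := by
      intro u hu
      apply hsupp1
      simp only [Function.mem_support] at hu ⊢
      intro h
      exact hu (by rw [h]; ring)
    have e1 : ∫ ω, (Y ω * V ω) * K (a⁻¹ • (x - X ω)) ^ 2 ∂μ
        = ∫ u, mYV u * K (a⁻¹ • (x - u)) ^ 2 ∂volume :=
      density_ext_fun μ X hX _ hYV x r mYV hmYVmeas hYVdens _ hφ2meas (B ^ 2)
        (fun u => by
          rw [abs_pow]
          exact pow_le_pow_left₀ (abs_nonneg _) (hB _) 2) hsupp2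
    have e2 : ∫ ω, Y ω * K (a⁻¹ • (x - X ω)) ∂μ
        = ∫ u, mY u * K (a⁻¹ • (x - u)) ∂volume :=
      density_ext_fun μ X hX Y hYint x r mY hmYmeas hYdens _ hφ1meas B
        (fun u => hB _) hsupp1
    have e3 : ∫ ω, V ω * K (a⁻¹ • (x - X ω)) ∂μ
        = ∫ u, mV u * K (a⁻¹ • (x - u)) ∂volume :=
      density_ext_fun μ X hX V hVint x r mV hmVmeas hVdens _ hφ1meas B
        (fun u => hB _) hsupp1
    have c1 : (∫ u, mYV u * K (a⁻¹ • (x - u)) ^ 2 ∂volume)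
        = a ^ d * ∫ v, mYV (x - a • v) * K v ^ 2 ∂volume :=
      integral_kernel_change x mYV (fun v => K v ^ 2) ha
    have c2 : (∫ u, mY u * K (a⁻¹ • (x - u)) ∂volume)
        = a ^ d * ∫ v, mY (x - a • v) * K v ∂volume :=
      integral_kernel_change x mY K ha
    have c3 : (∫ u, mV u * K (a⁻¹ • (x - u)) ∂volume)
        = a ^ d * ∫ v, mV (x - a • v) * K v ∂volume :=
      integral_kernel_change x mV K ha
    have hA : (∫ ω, (Y ω * (a ^ d)⁻¹ * K (a⁻¹ • (x - X ω))) *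
              (V ω * (a ^ d)⁻¹ * K (a⁻¹ • (x - X ω))) ∂μ)
        = (a ^ d)⁻¹ * ((a ^ d)⁻¹ * ∫ ω, (Y ω * V ω) * K (a⁻¹ • (x - X ω)) ^ 2 ∂μ) := by
      rw [← integral_const_mul, ← integral_const_mul]
      refine integral_congr_ae (ae_of_all _ fun ω => ?_)
      beta_reduce
      ring
    have hB2 : (∫ ω, Y ω * (a ^ d)⁻¹ * K (a⁻¹ • (x - X ω)) ∂μ)
        = (a ^ d)⁻¹ * ∫ ω, Y ω * K (a⁻¹ • (x - X ω)) ∂μ := by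
      rw [← integral_const_mul]
      refine integral_congr_ae (ae_of_all _ fun ω => ?_)
      beta_reduce
      ring
    have hC2 : (∫ ω, V ω * (a ^ d)⁻¹ * K (a⁻¹ • (x - X ω)) ∂μ)
        = (a ^ d)⁻¹ * ∫ ω, V ω * K (a⁻¹ • (x - X ω)) ∂μ := by
      rw [← integral_const_mul]
      refine integral_congr_ae (ae_of_all _ fun ω => ?_)
      beta_reduce
      ring
    rw [hA, hB2, hC2, e1, e2, e3, c1, c2, c3]
    field_simp
  -- integrable dominators
  have hKcb : MeasurableSet (Metric.closedBall (0 : EuclideanSpace ℝ (Fin d)) ρ) :=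
    Metric.isClosed_closedBall.measurableSet
  have hcbfin : volume (Metric.closedBall (0 : EuclideanSpace ℝ (Fin d)) ρ) < ⊤ :=
    measure_closedBall_lt_top
  have hindint : ∀ c : ℝ, Integrable
      ((Metric.closedBall (0 : EuclideanSpace ℝ (Fin d)) ρ).indicator (fun _ => c)) volume :=
    fun c => (integrable_indicator_iff hKcb).2 (integrableOn_const hcbfin.ne)
  have hK2int : Integrable (fun v => K v ^ 2) volume := by
    refine Integrable.mono' (hindint (B ^ 2))
      (hKmeas.pow_const 2).aestronglyMeasurable (ae_of_all _ fun v => ?_)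
    by_cases h : v ∈ Metric.closedBall (0 : EuclideanSpace ℝ (Fin d)) ρ
    · rw [indicator_of_mem h, Real.norm_eq_abs, abs_pow]
      exact pow_le_pow_left₀ (abs_nonneg _) (hB _) 2
    · rw [indicator_of_notMem h]
      have hKv : K v = 0 := by
        by_contra hne
        exact h (hKsupp hne)
      simp [hKv]
  have hev : ∀ᶠ a in 𝓝[>] (0 : ℝ), 0 < a ∧ a < a₀ := by
    filter_upwards [Ioo_mem_nhdsGT ha₀] with a ha using ⟨ha.1, ha.2⟩
  -- main term limit
  have hI : Tendsto (fun a : ℝ => ∫ v, mYV (x - a • v) * K v ^ 2 ∂volume) (𝓝[>] 0)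
      (𝓝 (mYV x * ∫ u, K u ^ 2)) := by
    have hrep : mYV x * ∫ u, K u ^ 2 = ∫ v, mYV x * K v ^ 2 ∂volume :=
      (integral_const_mul _ _).symm
    rw [hrep]
    refine tendsto_integral_filter_of_dominated_convergence
      ((Metric.closedBall (0 : EuclideanSpace ℝ (Fin d)) ρ).indicator
        (fun _ => (|mYV x| + 1) * B ^ 2)) ?_ ?_ (hindint _) ?_
    · filter_upwards with a
      exact ((hmYVmeas.comp ((measurable_id.const_smul a).const_sub x)).mul
        (hKmeas.pow_const 2)).aestronglyMeasurable
    · filter_upwards [hev] with a ha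
      refine ae_of_all _ fun v => ?_
      by_cases h : v ∈ Metric.closedBall (0 : EuclideanSpace ℝ (Fin d)) ρ
      · rw [indicator_of_mem h]
        have hvρ : ‖v‖ ≤ ρ := by
          rw [← dist_zero_right]
          exact Metric.mem_closedBall.1 h
        have hdist : dist (x - a • v) x < δ := by
          rw [dist_eq_norm]
          have : x - a • v - x = -(a • v) := by abel
          rw [this, norm_neg, norm_smul, Real.norm_eq_abs, abs_of_pos ha.1]
          exact lt_of_le_of_lt (mul_le_mul_of_nonneg_left hvρ ha.1.le) (haδ ha.1 ha.2)
        rw [Real.norm_eq_abs, abs_mul, abs_pow]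
        refine mul_le_mul (hmYVloc _ hdist) (pow_le_pow_left₀ (abs_nonneg _) (hB _) 2)
          (by positivity) (by positivity)
      · rw [indicator_of_notMem h]
        have hKv : K v = 0 := by
          by_contra hne
          exact h (hKsupp hne)
        simp [hKv]
    · refine ae_of_all _ fun v => ?_
      have h1 : Tendsto (fun a : ℝ => x - a • v) (𝓝[>] 0) (𝓝 x) := by
        have hcont : Continuous (fun a : ℝ => x - a • v) :=
          continuous_const.sub (continuous_id.smul continuous_const)
        have h2 := hcont.tendsto 0
        simp only [zero_smul, sub_zero] at h2
        exact h2.mono_left nhdsWithin_le_nhds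
      exact (hmYVcont.tendsto.comp h1).mul_const _
  -- second term
  have hJb : ∀ (mZ : EuclideanSpace ℝ (Fin d) → ℝ), Measurable mZ →
      (∀ u ∈ Metric.ball x r, |mZ u| ≤ M) →
      ∀ {a : ℝ}, 0 < a → a < a₀ →
      |∫ v, mZ (x - a • v) * K v ∂volume|
        ≤ M * B * (volume (Metric.closedBall (0 : EuclideanSpace ℝ (Fin d)) ρ)).toReal := by
    intro mZ hmZ hmZb a ha haa
    have hbd : ∀ v, |mZ (x - a • v) * K v|
        ≤ (Metric.closedBall (0 : EuclideanSpace ℝ (Fin d)) ρ).indicator (fun _ => M * B) v := by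
      intro v
      by_cases hKv : K v = 0
      · rw [hKv, mul_zero, abs_zero]
        by_cases h : v ∈ Metric.closedBall (0 : EuclideanSpace ℝ (Fin d)) ρ
        · rw [indicator_of_mem h]
          positivity
        · rw [indicator_of_notMem h]
      · have hv : v ∈ Metric.closedBall (0 : EuclideanSpace ℝ (Fin d)) ρ := hKsupp hKv
        rw [indicator_of_mem hv]
        have hvρ : ‖v‖ ≤ ρ := by
          rw [← dist_zero_right]
          exact Metric.mem_closedBall.1 hv
        have hx' : x - a • v ∈ Metric.ball x r := by
          rw [Metric.mem_ball, dist_eq_norm]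
          have : x - a • v - x = -(a • v) := by abel
          rw [this, norm_neg, norm_smul, Real.norm_eq_abs, abs_of_pos ha]
          exact lt_of_le_of_lt (mul_le_mul_of_nonneg_left hvρ ha.le) (harρ ha haa)
        rw [abs_mul]
        exact mul_le_mul (hmZb _ hx') (hB v) (abs_nonneg _) hM
    have hint : Integrable (fun v => mZ (x - a • v) * K v) volume := by
      refine Integrable.mono' (hindint (M * B))
        ((hmZ.comp ((measurable_id.const_smul a).const_sub x)).mul hKmeas).aestronglyMeasurable
        (ae_of_all _ fun v => ?_)
      rw [Real.norm_eq_abs]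
      exact hbd v
    calc |∫ v, mZ (x - a • v) * K v ∂volume| ≤ ∫ v, |mZ (x - a • v) * K v| ∂volume := by
          simpa only [Real.norm_eq_abs] using
            norm_integral_le_integral_norm (μ := volume) (fun v => mZ (x - a • v) * K v)
      _ ≤ ∫ v, (Metric.closedBall (0 : EuclideanSpace ℝ (Fin d)) ρ).indicator
            (fun _ => M * B) v ∂volume := integral_mono hint.abs (hindint _) hbd
      _ = M * B * (volume (Metric.closedBall (0 : EuclideanSpace ℝ (Fin d)) ρ)).toReal := by
          rw [integral_indicator_const _ hKcb, smul_eq_mul, mul_comm]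
          rfl
  have hJ0 : Tendsto (fun a : ℝ => a ^ d * ((∫ v, mY (x - a • v) * K v ∂volume)
      * (∫ v, mV (x - a • v) * K v ∂volume))) (𝓝[>] 0) (𝓝 0) := by
    set c2 : ℝ := M * B * (volume (Metric.closedBall (0 : EuclideanSpace ℝ (Fin d)) ρ)).toReal
      with hc2
    have hc2nn : 0 ≤ c2 := by
      rw [hc2]
      positivity
    have hbound : ∀ᶠ a in 𝓝[>] (0 : ℝ),
        ‖a ^ d * ((∫ v, mY (x - a • v) * K v ∂volume)
          * (∫ v, mV (x - a • v) * K v ∂volume))‖ ≤ a ^ d * (c2 * c2) := by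
      filter_upwards [hev] with a ha
      have h1 := hJb mY hmYmeas hmYbdd ha.1 ha.2
      have h2 := hJb mV hmVmeas hmVbdd ha.1 ha.2
      rw [Real.norm_eq_abs, abs_mul, abs_mul, abs_of_pos (pow_pos ha.1 d)]
      refine mul_le_mul_of_nonneg_left ?_ (pow_pos ha.1 d).le
      exact mul_le_mul h1 h2 (abs_nonneg _) hc2nn
    have htend : Tendsto (fun a : ℝ => a ^ d * (c2 * c2)) (𝓝[>] 0) (𝓝 0) := by
      have h : Tendsto (fun a : ℝ => a ^ d) (𝓝[>] 0) (𝓝 0) := by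
        have h2 := (continuous_pow d).tendsto (0 : ℝ)
        rw [zero_pow (by omega : d ≠ 0)] at h2
        exact h2.mono_left nhdsWithin_le_nhds
      simpa using h.mul_const (c2 * c2)
    exact squeeze_zero_norm' hbound htend
  have hfinal : Tendsto (fun a : ℝ => (∫ v, mYV (x - a • v) * K v ^ 2 ∂volume)
      - a ^ d * ((∫ v, mY (x - a • v) * K v ∂volume)
        * (∫ v, mV (x - a • v) * K v ∂volume))) (𝓝[>] 0)
      (𝓝 (mYV x * ∫ u, K u ^ 2)) := by
    simpa using hI.sub hJ0
  refine Tendsto.congr' ?_ hfinal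
  filter_upwards [hev] with a ha
  exact (key a ha.1 ha.2).symm
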